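/- Let 𝔛 be a countable set with an action of a countable discrete group G, fix an enumeration G = {s_i : i ∈ ℕ}, let ω be a free ultrafilter on ℕ, let (x_n) be a sequence in 𝔛, and let (α_i) be strictly positive real numbers with ∑_{i,j} α_i α_j < ∞ (equivalently, (α_i) is summable). Set ξ_n(y) = ∑_{i∈ℕ} α_i 1[s_i·x_n = y] for y ∈ 𝔛, and for p ∈ {2, 4} define, for every sequence f = (f_n) of uniformly bounded functions f_n : 𝔛 → [0, ∞), Λ_p(f) = lim_{n→ω} ∑_{y∈𝔛} f_n(y) ξ_n(y)^p (the ultrafilter limit, which exists since the sums are uniformly bounded). Then for p ∈ {2, 4}, for every g ∈ G and every sequence (f^{(j)})_{j∈ℕ}, where f^{(j)} = (f^{(j)}_n)_n satisfies 0 ≤ f^{(j+1)}_n ≤ f^{(j)}_n ≤ 1 pointwise for all j, n: if inf_j Λ_p(f^{(j)}) = 0 then inf_j Λ_p((f^{(j)}_n ∘ g)_n) = 0, where (f ∘ g)(y) = f(g·y). (This expresses the quasi-invariance of the probability measures μ_ξ and μ_{ξ²} on the spectrum of the ultraproduct ℓ∞(𝔛)_ω.) -/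

import Mathlib

open Filter Topology

private lemma two_pow_ineq' {p q : ℕ} (hp : p = 2 ∨ p = 4) (hq : p = q + 1) {a b : ℝ}
    (ha : 0 ≤ a) (hb : 0 ≤ b) : (a + b) ^ p ≤ 2 ^ q * (a ^ p + b ^ p) := by
  rcases hp with rfl | rfl
  · obtain rfl : q = 1 := by omega
    nlinarith [sq_nonneg (a - b)]
  · obtain rfl : q = 3 := by omega
    nlinarith [sq_nonneg (a - b), sq_nonneg (a + b), sq_nonneg (a ^ 2 - b ^ 2),
      mul_nonneg ha hb, sq_nonneg (a * b)]

private lemma ultralim_spec {ω : Ultrafilter ℕ} {u : ℕ → ℝ} {a b : ℝ}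
    (h : ∀ n, u n ∈ Set.Icc a b) :
    Filter.Tendsto u ω (𝓝 (limUnder ω u)) ∧ limUnder ω u ∈ Set.Icc a b := by
  obtain ⟨c, hc, hle⟩ := (isCompact_Icc (a := a) (b := b)).ultrafilter_le_nhds
    (Ultrafilter.map u ω) (by
      rw [Ultrafilter.coe_map, Filter.le_principal_iff]
      exact Filter.mem_map.2 (Filter.Eventually.of_forall h))
  have ht : Filter.Tendsto u ω (𝓝 c) := by rwa [Ultrafilter.coe_map] at hle
  have hlim := ht.limUnder_eq
  rw [hlim]
  exact ⟨ht, hc⟩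

private lemma auxHasSum {𝔛 : Type*} [DecidableEq 𝔛] (c : ℕ → ℝ) (hc : ∀ i, 0 ≤ c i)
    (hsc : Summable c) (t : ℕ → 𝔛) :
    HasSum (fun y : 𝔛 => ∑' i, if t i = y then c i else 0) (∑' i, c i) ∧
    ∀ y, Summable (fun i => if t i = y then c i else 0) := by
  have hinj : Function.Injective (fun i : ℕ => ((t i, i) : 𝔛 × ℕ)) := by
    intro a b hab
    exact (Prod.ext_iff.1 hab).2
  have hzero : ∀ q : 𝔛 × ℕ, q ∉ Set.range (fun i : ℕ => ((t i, i) : 𝔛 × ℕ)) →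
      (if t q.2 = q.1 then c q.2 else 0) = 0 := by
    rintro ⟨y, i⟩ hq
    simp only [Set.mem_range, Prod.mk.injEq, not_exists] at hq
    have hqi := hq i
    by_cases hty : t i = y
    · exact absurd ⟨hty, rfl⟩ hqi
    · simp [hty]
  have hFsum : Summable (fun q : 𝔛 × ℕ => if t q.2 = q.1 then c q.2 else 0) := by
    rw [← hinj.summable_iff hzero]
    refine Summable.congr hsc fun i => ?_
    simp [Function.comp]
  have hsupp : Function.support (fun q : 𝔛 × ℕ => if t q.2 = q.1 then c q.2 else 0) ⊆
      Set.range (fun i : ℕ => ((t i, i) : 𝔛 × ℕ)) := by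
    intro q hqs
    by_contra hq
    exact hqs (hzero q hq)
  have hFtsum : (∑' q : 𝔛 × ℕ, if t q.2 = q.1 then c q.2 else 0) = ∑' i, c i := by
    rw [← hinj.tsum_eq hsupp]
    simp
  have hfiber : ∀ y, Summable (fun i => if t i = y then c i else 0) := fun y =>
    hFsum.prod_factor y
  refine ⟨?_, hfiber⟩
  have := HasSum.prod_fiberwise hFsum.hasSum (fun y => (hfiber y).hasSum)
  rwa [hFtsum] at this

private lemma helper {𝔛 : Type*} {p q : ℕ} (hq : p = q + 1) (ζ F : 𝔛 → ℝ) (B : ℝ)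
    (hζs : Summable ζ) (hζ0 : ∀ y, 0 ≤ ζ y) (hζB : ∀ y, ζ y ≤ B)
    (hF0 : ∀ y, 0 ≤ F y) (hF1 : ∀ y, F y ≤ 1) :
    Summable (fun y => F y * ζ y ^ p) ∧ (∑' y, F y * ζ y ^ p) ≤ B ^ q * ∑' y, ζ y := by
  have hpt : ∀ y, F y * ζ y ^ p ≤ B ^ q * ζ y := by
    intro y
    calc F y * ζ y ^ p ≤ 1 * ζ y ^ p :=
          mul_le_mul_of_nonneg_right (hF1 y) (pow_nonneg (hζ0 y) p)
      _ = ζ y ^ q * ζ y := by rw [one_mul, hq, pow_succ]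
      _ ≤ B ^ q * ζ y :=
          mul_le_mul_of_nonneg_right (pow_le_pow_left₀ (hζ0 y) (hζB y) q) (hζ0 y)
  have hpt0 : ∀ y, 0 ≤ F y * ζ y ^ p := fun y => mul_nonneg (hF0 y) (pow_nonneg (hζ0 y) p)
  have hsummable : Summable (fun y => F y * ζ y ^ p) :=
    Summable.of_nonneg_of_le hpt0 hpt (hζs.mul_left _)
  refine ⟨hsummable, ?_⟩
  calc (∑' y, F y * ζ y ^ p) ≤ ∑' y, B ^ q * ζ y :=
        Summable.tsum_le_tsum hpt hsummable (hζs.mul_left _)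
    _ = B ^ q * ∑' y, ζ y := tsum_mul_left

/-- Quasi-invariance of the measures `μ_ξ` (p = 2) and `μ_{ξ²}` (p = 4) on the
spectrum of `ℓ∞(𝔛)_ω`, where `ξ_n = ∑ᵢ αᵢ δ_{sᵢ • xₙ}` is built from a sequence `(xₙ)` in the
countable `G`-set `𝔛`, an enumeration `(sᵢ)` of `G` and strictly positive summable weights
`(αᵢ)`; `ω` is a free ultrafilter on `ℕ`.  Quasi-invariance is expressed through decreasing
sequences of positive "functions" as in Lemma 1.7 of the paper. -/
theorem stmt6 {𝔛 : Type*} [Countable 𝔛] [DecidableEq 𝔛]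
    {G : Type*} [Group G] [Countable G] [MulAction G 𝔛]
    (s : ℕ → G) (hs : Function.Surjective s)
    (ω : Ultrafilter ℕ) (hω : (ω : Filter ℕ) ≤ Filter.cofinite)
    (x : ℕ → 𝔛) (α : ℕ → ℝ) (hα : ∀ i, 0 < α i) (hαsum : Summable α)
    (ξ : ℕ → 𝔛 → ℝ) (hξ : ∀ n y, ξ n y = ∑' i : ℕ, if s i • x n = y then α i else 0)
    (p : ℕ) (hp : p = 2 ∨ p = 4) (g : G)
    (f : ℕ → ℕ → 𝔛 → ℝ)
    (hf0 : ∀ j n y, 0 ≤ f j n y) (hf1 : ∀ j n y, f j n y ≤ 1)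
    (hfdec : ∀ j n y, f (j + 1) n y ≤ f j n y)
    (h : ⨅ j : ℕ, limUnder (ω : Filter ℕ)
        (fun n => ∑' y : 𝔛, f j n y * ξ n y ^ p) = 0) :
    ⨅ j : ℕ, limUnder (ω : Filter ℕ)
        (fun n => ∑' y : 𝔛, f j n (g • y) * ξ n y ^ p) = 0 := by
  classical
  obtain ⟨q, hq⟩ : ∃ q : ℕ, p = q + 1 := by
    rcases hp with hp2 | hp2 <;> exact ⟨p - 1, by omega⟩
  -- basic facts about ξ
  have hA0 : (0:ℝ) ≤ ∑' i, α i := tsum_nonneg fun i => (hα i).le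
  have haux := fun n => auxHasSum α (fun i => (hα i).le) hαsum (fun i => s i • x n)
  have hξhs : ∀ n, HasSum (ξ n) (∑' i, α i) := by
    intro n
    have h1 := (haux n).1
    have h2 : ξ n = fun y => ∑' i, if s i • x n = y then α i else 0 := funext (hξ n)
    rw [h2]
    exact h1
  have hξsum : ∀ n, Summable (ξ n) := fun n => (hξhs n).summable
  have hξtsum : ∀ n, (∑' y, ξ n y) = ∑' i, α i := fun n => (hξhs n).tsum_eq
  have hind : ∀ n y, Summable (fun i => if s i • x n = y then α i else 0) := fun n y =>
    (haux n).2 y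
  have hξ0 : ∀ n y, 0 ≤ ξ n y := by
    intro n y
    rw [hξ n y]
    refine tsum_nonneg fun i => ?_
    by_cases hi : s i • x n = y <;> simp [hi, (hα i).le]
  have hξle : ∀ n y, ξ n y ≤ ∑' i, α i := by
    intro n y
    rw [hξ n y]
    refine Summable.tsum_le_tsum (fun i => ?_) (hind n y) hαsum
    by_cases hi : s i • x n = y <;> simp [hi, (hα i).le]
  have hξlow : ∀ n i, α i ≤ ξ n (s i • x n) := by
    intro n i
    rw [hξ n _]
    have := Summable.le_tsum (hind n (s i • x n)) i (fun j _ => by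
      by_cases hj : s j • x n = s i • x n <;> simp [hj, (hα j).le])
    simpa using this
  -- bounds on the sums
  have hbound : ∀ (F : ℕ → 𝔛 → ℝ), (∀ n y, 0 ≤ F n y) → (∀ n y, F n y ≤ 1) → ∀ n,
      (∑' y, F n y * ξ n y ^ p) ∈ Set.Icc (0:ℝ) ((∑' i, α i) ^ p) := by
    intro F h0 h1 n
    constructor
    · exact tsum_nonneg fun y => mul_nonneg (h0 n y) (pow_nonneg (hξ0 n y) p)
    · have h2 := (helper hq (ξ n) (F n) (∑' i, α i) (hξsum n) (hξ0 n) (hξle n)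
        (h0 n) (h1 n)).2
      rw [hξtsum n] at h2
      calc (∑' y, F n y * ξ n y ^ p) ≤ (∑' i, α i) ^ q * (∑' i, α i) := h2
        _ = (∑' i, α i) ^ p := by rw [hq, pow_succ]
  set Λ : ℕ → ℝ := fun j => limUnder (ω : Filter ℕ)
      (fun n => ∑' y : 𝔛, f j n y * ξ n y ^ p) with hΛdef
  set Λ' : ℕ → ℝ := fun j => limUnder (ω : Filter ℕ)
      (fun n => ∑' y : 𝔛, f j n (g • y) * ξ n y ^ p) with hΛ'def
  have hΛt : ∀ j, Filter.Tendsto (fun n => ∑' y : 𝔛, f j n y * ξ n y ^ p) ω (𝓝 (Λ j)) :=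
    fun j => (ultralim_spec (hbound (f j) (hf0 j) (hf1 j))).1
  have hΛ't : ∀ j, Filter.Tendsto (fun n => ∑' y : 𝔛, f j n (g • y) * ξ n y ^ p) ω
      (𝓝 (Λ' j)) := fun j => (ultralim_spec (hbound (fun n y => f j n (g • y))
        (fun n y => hf0 j n (g • y)) (fun n y => hf1 j n (g • y)))).1
  have hΛ'0 : ∀ j, 0 ≤ Λ' j := fun j => (ultralim_spec (hbound (fun n y => f j n (g • y))
        (fun n y => hf0 j n (g • y)) (fun n y => hf1 j n (g • y)))).2.1
  have hbdd : BddBelow (Set.range Λ') := ⟨0, by rintro v ⟨j, rfl⟩; exact hΛ'0 j⟩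
  refine le_antisymm ?_ (le_ciInf hΛ'0)
  have hmain : ∀ ε : ℝ, 0 < ε → (⨅ j, Λ' j) ≤ ε := by
    intro ε hε
    set δ : ℝ := min (ε / 2 ^ p) 1 with hδdef
    have hδ0 : 0 < δ := lt_min (by positivity) one_pos
    have hδ1 : δ ≤ 1 := min_le_right _ _
    -- choose N with small tail
    obtain ⟨N, hN⟩ : ∃ N : ℕ, (∑' i, α (i + N)) ≤ δ := by
      have h1 : Filter.Tendsto (fun N => ∑ i ∈ Finset.range N, α i) atTop
          (𝓝 (∑' i, α i)) := hαsum.hasSum.tendsto_sum_nat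
      have h2 : ∀ᶠ N in atTop, (∑' i, α i) - δ < ∑ i ∈ Finset.range N, α i :=
        h1.eventually (eventually_gt_nhds (by linarith))
      obtain ⟨N, hN2⟩ := h2.exists
      refine ⟨N, ?_⟩
      have h3 := Summable.sum_add_tsum_nat_add N hαsum
      linarith
    have hαshift : Summable (fun i => α (i + N)) := (summable_nat_add_iff N).2 hαsum
    have htail0 : (0:ℝ) ≤ ∑' i, α (i + N) := tsum_nonneg fun i => (hα _).le
    -- the translating constants
    set k : ℕ → ℕ := fun i => (hs (g * s i)).choose with hkdef
    have hk : ∀ i, s (k i) = g * s i := fun i => (hs (g * s i)).choose_spec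
    set R : ℝ := ∑ i ∈ Finset.range N, α i / α (k i) with hRdef
    have hR0 : 0 ≤ R := Finset.sum_nonneg fun i _ => div_nonneg (hα i).le (hα _).le
    set C : ℝ := R + 1 with hCdef
    have hC0 : 0 < C := by linarith
    set K : ℝ := 2 ^ q * C ^ p with hKdef
    have hK0 : 0 < K := by positivity
    -- the key pointwise-in-n estimate
    have key : ∀ j n, (∑' y : 𝔛, f j n (g • y) * ξ n y ^ p) ≤
        K * (∑' y : 𝔛, f j n y * ξ n y ^ p) + 2 ^ q * δ ^ p := by
      intro j n
      have hauxT := auxHasSum (fun i => α (i + N)) (fun i => (hα _).le) hαshift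
        (fun i => s (i + N) • x n)
      set T : 𝔛 → ℝ := fun w => ∑' i, if s (i + N) • x n = w then α (i + N) else 0 with hTdef
      have hThs : HasSum T (∑' i, α (i + N)) := hauxT.1
      have hT0 : ∀ w, 0 ≤ T w := by
        intro w
        refine tsum_nonneg fun i => ?_
        by_cases hi : s (i + N) • x n = w <;> simp [hi, (hα _).le]
      have hTle : ∀ w, T w ≤ ∑' i, α (i + N) := by
        intro w
        refine Summable.tsum_le_tsum (fun i => ?_) (hauxT.2 w) hαshift
        by_cases hi : s (i + N) • x n = w <;> simp [hi, (hα _).le]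
      have hT'sum : Summable (fun z => T (g⁻¹ • z)) :=
        hThs.summable.comp_injective (MulAction.injective g⁻¹)
      -- decomposition of ξ
      have hdec : ∀ w, ξ n w =
          (∑ i ∈ Finset.range N, if s i • x n = w then α i else 0) + T w := by
        intro w
        rw [hξ n w]
        exact (Summable.sum_add_tsum_nat_add N (hind n w)).symm
      -- head estimate and comparison
      have hξ'le : ∀ z : 𝔛, ξ n (g⁻¹ • z) ≤ C * ξ n z + T (g⁻¹ • z) := by
        intro z
        rw [hdec (g⁻¹ • z)]
        refine add_le_add_left ?_ _
        refine le_trans (Finset.sum_le_sum (g := fun i => α i / α (k i) * ξ n z)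
          fun i _ => ?_) ?_
        · split_ifs with hiz
          · have h1 : s (k i) • x n = z := by
              rw [hk i, mul_smul, hiz, smul_inv_smul]
            have h2 : α (k i) ≤ ξ n z := h1 ▸ hξlow n (k i)
            calc α i = α i / α (k i) * α (k i) :=
                  (div_mul_cancel₀ (α i) (hα (k i)).ne').symm
              _ ≤ α i / α (k i) * ξ n z :=
                  mul_le_mul_of_nonneg_left h2 (div_nonneg (hα i).le (hα _).le)
          · exact mul_nonneg (div_nonneg (hα i).le (hα _).le) (hξ0 n z)
        · rw [← Finset.sum_mul, ← hRdef]
          exact mul_le_mul_of_nonneg_right (by rw [hCdef]; linarith) (hξ0 n z)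
      -- pointwise estimate
      have hpt : ∀ z : 𝔛, f j n z * ξ n (g⁻¹ • z) ^ p ≤
          K * (f j n z * ξ n z ^ p) + 2 ^ q * T (g⁻¹ • z) ^ p := by
        intro z
        have h1 : ξ n (g⁻¹ • z) ^ p ≤ (C * ξ n z + T (g⁻¹ • z)) ^ p :=
          pow_le_pow_left₀ (hξ0 n _) (hξ'le z) p
        have h2 : (C * ξ n z + T (g⁻¹ • z)) ^ p ≤
            2 ^ q * ((C * ξ n z) ^ p + T (g⁻¹ • z) ^ p) :=
          two_pow_ineq' hp hq (mul_nonneg hC0.le (hξ0 n z)) (hT0 _)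
        have h3 : ξ n (g⁻¹ • z) ^ p ≤
            2 ^ q * (C ^ p * ξ n z ^ p + T (g⁻¹ • z) ^ p) := by
          rw [← mul_pow]
          exact h1.trans h2
        have hfz0 := hf0 j n z
        have hfz1 := hf1 j n z
        have hTp0 : (0:ℝ) ≤ T (g⁻¹ • z) ^ p := pow_nonneg (hT0 _) p
        have h4 : f j n z * ξ n (g⁻¹ • z) ^ p ≤
            f j n z * (2 ^ q * (C ^ p * ξ n z ^ p + T (g⁻¹ • z) ^ p)) :=
          mul_le_mul_of_nonneg_left h3 hfz0
        have h5 : f j n z * (2 ^ q * (C ^ p * ξ n z ^ p + T (g⁻¹ • z) ^ p)) =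
            K * (f j n z * ξ n z ^ p) + 2 ^ q * T (g⁻¹ • z) ^ p * f j n z := by
          rw [hKdef]; ring
        have h2q : (0:ℝ) ≤ 2 ^ q := by positivity
        have h6 := mul_le_mul_of_nonneg_left hfz1 (mul_nonneg h2q hTp0)
        rw [mul_one] at h6
        linarith
      -- summability facts
      have hζ'sum : Summable (fun z : 𝔛 => ξ n (g⁻¹ • z)) :=
        (hξsum n).comp_injective (MulAction.injective g⁻¹)
      have hL : Summable (fun z : 𝔛 => f j n z * ξ n (g⁻¹ • z) ^ p) :=
        (helper hq (fun z : 𝔛 => ξ n (g⁻¹ • z)) (f j n) (∑' i, α i) hζ'sum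
          (fun z => hξ0 n _) (fun z => hξle n _) (hf0 j n) (hf1 j n)).1
      have hR1 : Summable (fun z : 𝔛 => f j n z * ξ n z ^ p) :=
        (helper hq (ξ n) (f j n) (∑' i, α i) (hξsum n) (hξ0 n) (hξle n)
          (hf0 j n) (hf1 j n)).1
      have hTpt : ∀ z : 𝔛, T (g⁻¹ • z) ^ p ≤ (∑' i, α (i + N)) ^ q * T (g⁻¹ • z) := by
        intro z
        rw [hq, pow_succ]
        exact mul_le_mul_of_nonneg_right (pow_le_pow_left₀ (hT0 _) (hTle _) q) (hT0 _)
      have hTpsum : Summable (fun z : 𝔛 => T (g⁻¹ • z) ^ p) :=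
        Summable.of_nonneg_of_le (fun z => pow_nonneg (hT0 _) p) hTpt (hT'sum.mul_left _)
      have hTre : (∑' z : 𝔛, T (g⁻¹ • z)) = ∑' w, T w := by
        have := Equiv.tsum_eq (MulAction.toPerm g⁻¹ : Equiv.Perm 𝔛) T
        simpa [MulAction.toPerm_apply] using this
      have hTtsum : (∑' z : 𝔛, T (g⁻¹ • z) ^ p) ≤ δ ^ p := by
        calc (∑' z : 𝔛, T (g⁻¹ • z) ^ p)
            ≤ ∑' z : 𝔛, (∑' i, α (i + N)) ^ q * T (g⁻¹ • z) :=
              Summable.tsum_le_tsum hTpt hTpsum (hT'sum.mul_left _)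
          _ = (∑' i, α (i + N)) ^ q * ∑' z : 𝔛, T (g⁻¹ • z) := tsum_mul_left
          _ = (∑' i, α (i + N)) ^ q * (∑' i, α (i + N)) := by rw [hTre, hThs.tsum_eq]
          _ = (∑' i, α (i + N)) ^ p := by rw [hq, pow_succ]
          _ ≤ δ ^ p := pow_le_pow_left₀ htail0 hN p
      -- reindexing
      have hre : (∑' y : 𝔛, f j n (g • y) * ξ n y ^ p) =
          ∑' z : 𝔛, f j n z * ξ n (g⁻¹ • z) ^ p := by
        have := Equiv.tsum_eq (MulAction.toPerm g : Equiv.Perm 𝔛)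
          (fun z : 𝔛 => f j n z * ξ n (g⁻¹ • z) ^ p)
        simp only [MulAction.toPerm_apply, inv_smul_smul] at this
        exact this
      calc (∑' y : 𝔛, f j n (g • y) * ξ n y ^ p)
          = ∑' z : 𝔛, f j n z * ξ n (g⁻¹ • z) ^ p := hre
        _ ≤ ∑' z : 𝔛, (K * (f j n z * ξ n z ^ p) + 2 ^ q * T (g⁻¹ • z) ^ p) :=
            Summable.tsum_le_tsum hpt hL ((hR1.mul_left K).add (hTpsum.mul_left _))
        _ = K * (∑' z : 𝔛, f j n z * ξ n z ^ p) + 2 ^ q * ∑' z : 𝔛, T (g⁻¹ • z) ^ p := by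
            rw [Summable.tsum_add (hR1.mul_left K) (hTpsum.mul_left _), tsum_mul_left, tsum_mul_left]
        _ ≤ K * (∑' z : 𝔛, f j n z * ξ n z ^ p) + 2 ^ q * δ ^ p := by
            have h2q : (0:ℝ) ≤ 2 ^ q := by positivity
            exact add_le_add_right (mul_le_mul_of_nonneg_left hTtsum h2q) _
    -- pass to the limit
    have hE : 2 ^ q * δ ^ p ≤ ε / 2 := by
      have hδp : δ ^ p ≤ δ := pow_le_of_le_one hδ0.le hδ1 (by omega)
      have hδ2 : δ ≤ ε / 2 ^ p := min_le_left _ _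
      have h2q : (0:ℝ) < 2 ^ q := by positivity
      have hcalc : (2:ℝ) ^ q * (ε / 2 ^ p) = ε / 2 := by
        rw [hq, pow_succ]
        field_simp
      nlinarith
    have hlim : ∀ j, Λ' j ≤ K * Λ j + 2 ^ q * δ ^ p := by
      intro j
      refine le_of_tendsto_of_tendsto' (hΛ't j) ?_ (key j)
      exact ((hΛt j).const_mul K).add_const _
    have hinfΛ : (⨅ j, Λ j) < ε / (2 * K) := by
      rw [h]
      positivity
    obtain ⟨j, hj⟩ := exists_lt_of_ciInf_lt hinfΛ
    have hKj : K * Λ j ≤ K * (ε / (2 * K)) := mul_le_mul_of_nonneg_left hj.le hK0.le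
    have hKε : K * (ε / (2 * K)) = ε / 2 := by
      field_simp
    have hΛ'j : Λ' j ≤ ε := by
      have := hlim j
      rw [hKε] at hKj
      linarith
    exact (ciInf_le hbdd j).trans hΛ'j
  by_contra hcon
  push_neg at hcon
  have h1 := hmain ((⨅ j, Λ' j) / 2) (by linarith)
  linarith
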